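/- Let E be a real vector space, q ≥ 1, and eq : E → (Fin q → E) satisfy Σ_k eq(u)(k) = u for every u ∈ E. For ω ∈ ℝ define R_ω(f)(k) = (1−ω)·f(k) + ω·eq(Σ_j f(j))(k). Then Σ_k R_ω(f)(k) = Σ_k f(k) for all f and ω; and for every ω ≠ 1, R_{ω/(ω−1)}(R_ω(f)) = f for all f. In particular, relaxing with rate ω and then with rate ω/(ω−1) returns the original distribution functions, which underlies the involution property of the entropy-adapted relaxation. -/

import Mathlib

/-- The relaxation with rate `ω`, `R_ω(f)ₖ = (1−ω) fₖ + ω eqₖ(Σⱼ fⱼ)`, conserves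
the sum of the distribution functions; moreover, for `ω ≠ 1`, relaxing with rate `ω`
and then with rate `ω/(ω−1)` returns the original distribution functions. -/
theorem relaxation_conserves_and_inverse (E : Type*) [AddCommGroup E] [Module ℝ E]
    (q : ℕ) (hq : 1 ≤ q)
    (eq : E → Fin q → E) (heq : ∀ u : E, ∑ k, eq u k = u)
    (R : ℝ → (Fin q → E) → Fin q → E)
    (hR : ∀ (ω : ℝ) (f : Fin q → E) (k : Fin q),
      R ω f k = (1 - ω) • f k + ω • eq (∑ j, f j) k) :
    (∀ (ω : ℝ) (f : Fin q → E), ∑ k, R ω f k = ∑ k, f k) ∧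
    (∀ ω : ℝ, ω ≠ 1 → ∀ f : Fin q → E, R (ω / (ω - 1)) (R ω f) = f) := by
  have hsum : ∀ (ω : ℝ) (f : Fin q → E), ∑ k, R ω f k = ∑ k, f k := by
    intro ω f
    simp only [hR, Finset.sum_add_distrib, ← Finset.smul_sum, heq]
    module
  refine ⟨hsum, fun ω hω f => ?_⟩
  have hω' : ω - 1 ≠ 0 := sub_ne_zero.mpr hω
  funext k
  rw [hR, hsum, hR]
  have h1 : (1 - ω / (ω - 1)) * (1 - ω) = 1 := by field_simp; ring
  have h2 : (1 - ω / (ω - 1)) * ω + ω / (ω - 1) = 0 := by field_simp; ring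
  rw [smul_add, smul_smul, smul_smul, h1, one_smul, add_assoc, ← add_smul, h2, zero_smul,
    add_zero]
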